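/- Let ω ∈ T_▷(𝔾) with ‖ω‖ = 1 and let 𝒰 be a free ultrafilter on ℕ. Then the map L_{m_𝒰} is a contractive projection from B(L²(𝔾)) onto H̃_{m_𝒰}, and H̃_{m_𝒰} = H̃_ω. -/

import Mathlib

set_option maxHeartbeats 1000000
set_option synthInstance.maxHeartbeats 2000000

open Filter Topology

noncomputable section

namespace QGPaper

/-- Abstract data of a (von Neumann algebraic) locally compact quantum group `𝔾`,
standardly represented on the Hilbert space `H = L²(𝔾)`.

* `M` is the von Neumann algebra `L^∞(𝔾) ⊆ B(L²(𝔾))`;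
* `Mhat` is the dual quantum group von Neumann algebra `L^∞(𝔾̂)`;
* `T` is the space `T(L²(𝔾))` of trace class operators, regarded (isometrically) as the
  subspace of normal functionals inside the dual `B(L²(𝔾))* = (H →L[ℂ] H) →L[ℂ] ℂ`;
* `conv` is the convolution `▷` on `T(L²(𝔾))` induced by the right fundamental unitary `V`
  via `Γ̃(x) = V(x⊗1)V*`, i.e. `ω ▷ τ = Γ̃⋆(ω ⊗ τ)`;
* `actL ω x = ω ▷ x = (ι⊗ω)Γ̃(x)` and `actR x ω = x ▷ ω = (ω⊗ι)Γ̃(x)` are the induced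
  module actions of `T_▷(𝔾)` on `B(L²(𝔾))`, determined by duality:
  `⟨γ, ω ▷ x⟩ = ⟨γ ▷ ω, x⟩` and `⟨γ, x ▷ ω⟩ = ⟨ω ▷ γ, x⟩`;
* `C0` is the reduced C*-algebra `C₀(𝔾)`. -/
structure QGData (H : Type u) [NormedAddCommGroup H] [InnerProductSpace ℂ H]
    [CompleteSpace H] : Type u where
  M : VonNeumannAlgebra H
  Mhat : VonNeumannAlgebra H
  T : Submodule ℂ ((H →L[ℂ] H) →L[ℂ] ℂ)
  T_closed : IsClosed (T : Set ((H →L[ℂ] H) →L[ℂ] ℂ))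
  /-- the normal functionals separate the points of `B(L²(𝔾))` -/
  T_separates : ∀ x : H →L[ℂ] H, (∀ ω : T, ω.1 x = 0) → x = 0
  /-- `B(L²(𝔾)) = T(L²(𝔾))*`: every bounded functional on `T(L²(𝔾))` is represented by
  a bounded operator -/
  T_predual : ∀ φ : T →ₗ[ℂ] ℂ, ∀ C : ℝ, (∀ ω : T, ‖φ ω‖ ≤ C * ‖ω‖) →
    ∃ x : H →L[ℂ] H, ‖x‖ ≤ C ∧ ∀ ω : T, φ ω = ω.1 x
  /-- the convolution product `▷` of `T_▷(𝔾)` -/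
  conv : T → T → T
  conv_add_left : ∀ ω₁ ω₂ γ, conv (ω₁ + ω₂) γ = conv ω₁ γ + conv ω₂ γ
  conv_add_right : ∀ ω γ₁ γ₂, conv ω (γ₁ + γ₂) = conv ω γ₁ + conv ω γ₂
  conv_smul_left : ∀ (c : ℂ) ω γ, conv (c • ω) γ = c • conv ω γ
  conv_smul_right : ∀ (c : ℂ) ω γ, conv ω (c • γ) = c • conv ω γ
  conv_assoc : ∀ ω γ τ, conv (conv ω γ) τ = conv ω (conv γ τ)
  norm_conv_le : ∀ ω γ, ‖conv ω γ‖ ≤ ‖ω‖ * ‖γ‖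
  /-- `ω ▷ x`, the left action of `T_▷(𝔾)` on `B(L²(𝔾))` -/
  actL : T → (H →L[ℂ] H) → (H →L[ℂ] H)
  /-- `x ▷ ω`, the right action of `T_▷(𝔾)` on `B(L²(𝔾))` -/
  actR : (H →L[ℂ] H) → T → (H →L[ℂ] H)
  actL_spec : ∀ (ω γ : T) (x : H →L[ℂ] H), γ.1 (actL ω x) = (conv γ ω).1 x
  actR_spec : ∀ (ω γ : T) (x : H →L[ℂ] H), γ.1 (actR x ω) = (conv ω γ).1 x
  /-- for `x ∈ L^∞(𝔾)` one has `ω ▷ x = π(ω) ⋆ x ∈ L^∞(𝔾)` -/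
  actL_mem_M : ∀ (ω : T), ∀ x ∈ M, actL ω x ∈ M
  /-- for `x ∈ L^∞(𝔾)` one has `x ▷ ω = x ⋆ π(ω) ∈ L^∞(𝔾)` -/
  actR_mem_M : ∀ (ω : T), ∀ x ∈ M, actR x ω ∈ M
  /-- for `x ∈ L^∞(𝔾)`, `x ▷ ω = x ⋆ π(ω)` only depends on `π(ω) = ω|_{L^∞(𝔾)}` -/
  actR_depends_on_pi : ∀ x ∈ M, ∀ ω γ : T,
    (∀ y ∈ M, ω.1 y = γ.1 y) → actR x ω = actR x γ
  /-- `ω ▷ x̂ = ⟨ω,1⟩ x̂` for `x̂ ∈ L^∞(𝔾̂)` -/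
  actL_Mhat : ∀ (ω : T), ∀ x ∈ Mhat, actL ω x = (ω.1 1) • x
  /-- `x̂ ▷ ω = ⟨ω,x̂⟩ 1` for `x̂ ∈ L^∞(𝔾̂)` -/
  actR_Mhat : ∀ (ω : T), ∀ x ∈ Mhat, actR x ω = (ω.1 x) • (1 : H →L[ℂ] H)
  /-- `L^∞(𝔾)` is weak*-closed: the bipolar of `L^∞(𝔾)` w.r.t. the pairing with `T` is itself -/
  M_bipolar : ∀ x : H →L[ℂ] H,
    (∀ ω : T, (∀ y ∈ M, ω.1 y = 0) → ω.1 x = 0) → x ∈ M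
  /-- `L^∞(𝔾̂)` is weak*-closed -/
  Mhat_bipolar : ∀ x : H →L[ℂ] H,
    (∀ ω : T, (∀ y ∈ Mhat, ω.1 y = 0) → ω.1 x = 0) → x ∈ Mhat
  /-- the reduced C*-algebra `C₀(𝔾)` -/
  C0 : Set (H →L[ℂ] H)
  C0_subset_M : C0 ⊆ (M : Set (H →L[ℂ] H))
  C0_isClosed : IsClosed C0

namespace QGData

variable {H : Type u} [NormedAddCommGroup H] [InnerProductSpace ℂ H] [CompleteSpace H]
variable (q : QGData H)

/-- a state of `T_▷(𝔾)`: a norm-one (automatically positive) normal functional with `ω(1) = 1`. -/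
def IsState (ω : q.T) : Prop := ‖ω‖ = 1 ∧ ω.1 1 = 1

/-- the space `H̃_ω` of `ω`-harmonic operators in `B(L²(𝔾))` -/
def Hsharp (ω : q.T) : Set (H →L[ℂ] H) := {x | q.actL ω x = x}

/-- `pow ω n = ω^(n+1)`, the convolution powers of `ω` -/
def pow (ω : q.T) : ℕ → q.T
  | 0 => ω
  | n + 1 => q.conv (pow ω n) ω

/-- the Cesàro sums `ω_n = (1/n) ∑_{k=1}^n ω^k` -/
def cesaro (ω : q.T) (n : ℕ) : q.T := (n : ℂ)⁻¹ • ∑ k ∈ Finset.range n, q.pow ω k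

/-- the preannihilator `L^∞(𝔾̂)_⊥` of `L^∞(𝔾̂)` in `T_▷(𝔾)` -/
def MhatPerp : Set q.T := {ω : q.T | ∀ y ∈ q.Mhat, ω.1 y = 0}

/-- the preannihilator `L^∞(𝔾)_⊥` of `L^∞(𝔾)` in `T(L²(𝔾))` -/
def MPerp : Set q.T := {ω : q.T | ∀ y ∈ q.M, ω.1 y = 0}

/-- the closed left ideal `J_ω`, the norm closure of `{γ - γ ▷ ω : γ ∈ T_▷(𝔾)}` -/
def Jideal (ω : q.T) : Set q.T := closure {τ : q.T | ∃ γ : q.T, τ = γ - q.conv γ ω}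

/-- `LUC(𝔾)`, the closed linear span of `{x ⋆ f : x ∈ L^∞(𝔾), f ∈ L¹(𝔾)}`
(note `x ⋆ π(ω) = x ▷ ω` for `x ∈ L^∞(𝔾)`). -/
def LUC : Set (H →L[ℂ] H) :=
  closure (Submodule.span ℂ {y : H →L[ℂ] H | ∃ x ∈ q.M, ∃ ω : q.T, y = q.actR x ω} :
    Set (H →L[ℂ] H))

/-- `𝔾` is amenable: there is a left invariant mean on `L^∞(𝔾)`, i.e. a state `m` with
`⟨m, x ⋆ f⟩ = ⟨f,1⟩⟨m,x⟩` for all `x ∈ L^∞(𝔾)`, `f ∈ L¹(𝔾)` (every state of `L^∞(𝔾)`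
being the restriction of a state of `B(L²(𝔾))`). -/
def Amenable : Prop :=
  ∃ m : (H →L[ℂ] H) →L[ℂ] ℂ, ‖m‖ = 1 ∧ m 1 = 1 ∧
    ∀ x ∈ q.M, ∀ ω : q.T, m (q.actR x ω) = ω.1 1 * m x

/-- the norm of `π(ω) = ω|_{L^∞(𝔾)}` in `L¹(𝔾) = L^∞(𝔾)_*` -/
def piNorm (ω : q.T) : ℝ := ⨆ x : {x : H →L[ℂ] H // x ∈ q.M ∧ ‖x‖ ≤ 1}, ‖ω.1 x.1‖

/-- `𝔾` is co-amenable: the convolution algebra `L¹(𝔾) = T_▷(𝔾)/L^∞(𝔾)_⊥` has a bounded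
(two-sided) approximate identity. -/
def CoAmenable : Prop :=
  ∃ C : ℝ, 0 < C ∧ ∀ ε : ℝ, 0 < ε → ∀ S : Finset q.T, ∃ e : q.T, q.piNorm e ≤ C ∧
    ∀ ω ∈ S, q.piNorm (q.conv ω e - ω) < ε ∧ q.piNorm (q.conv e ω - ω) < ε

/-- `𝔾` is discrete: `L¹(𝔾)` is unital. -/
def Discrete : Prop :=
  ∃ e : q.T, ∀ ω : q.T, ∀ x ∈ q.M, (q.conv e ω).1 x = ω.1 x ∧ (q.conv ω e).1 x = ω.1 x

/-- `𝔾` is compact: `1 ∈ C₀(𝔾)`. -/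
def Compact : Prop := (1 : H →L[ℂ] H) ∈ q.C0

/-- `𝔾` is finite: `L^∞(𝔾)` is finite dimensional. -/
def Finite : Prop := FiniteDimensional ℂ q.M.toStarSubalgebra.toSubalgebra

/-- a state `ω` is non-degenerate if for every non-zero positive `x ∈ C₀(𝔾)` there is
`n` with `⟨ω^n, x⟩ > 0`. -/
def NonDegenerate (ω : q.T) : Prop :=
  ∀ x ∈ q.C0, x ≠ 0 → ContinuousLinearMap.IsPositive x →
    ∃ n : ℕ, 0 < ((q.pow ω n).1 x).re


/-- the family `𝒥 = {J_ω : ω a state of T_▷(𝔾)}` -/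
def Jfamily : Set (Set q.T) := {S | ∃ ω : q.T, q.IsState ω ∧ S = q.Jideal ω}

/-- a subset `J` of `T_▷(𝔾)` has a bounded right approximate identity (for `▷`),
phrased via the standard multi-element approximation property with a fixed bound. -/
def HasRightBAI (J : Set q.T) : Prop :=
  ∃ C : ℝ, 0 < C ∧ ∀ ε : ℝ, 0 < ε → ∀ S : Finset q.T, (↑S : Set q.T) ⊆ J →
    ∃ e ∈ J, ‖e‖ ≤ C ∧ ∀ γ ∈ S, ‖q.conv γ e - γ‖ < ε

end QGData

/-- the annihilator `K(L²(𝔾))^⊥` of the compact operators in `B(L²(𝔾))*` -/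
def Kperp (H : Type u) [NormedAddCommGroup H] [InnerProductSpace ℂ H] [CompleteSpace H] :
    Set ((H →L[ℂ] H) →L[ℂ] ℂ) :=
  {m | ∀ x : H →L[ℂ] H, IsCompactOperator ⇑x → m x = 0}


namespace QGData

section Aux

variable {H : Type u} [NormedAddCommGroup H] [InnerProductSpace ℂ H] [CompleteSpace H]
variable (q : QGData H)

lemma eq_of_T {x y : H →L[ℂ] H} (h : ∀ γ : q.T, γ.1 x = γ.1 y) : x = y := by
  have h0 : ∀ γ : q.T, γ.1 (x - y) = 0 := fun γ => by rw [map_sub, h γ, sub_self]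
  exact sub_eq_zero.mp (q.T_separates (x - y) h0)

lemma apply_le (γ : q.T) (z : H →L[ℂ] H) : ‖γ.1 z‖ ≤ ‖γ‖ * ‖z‖ := by
  rw [Submodule.coe_norm]
  exact γ.1.le_opNorm z

lemma norm_le_of_T (x : H →L[ℂ] H) (C : ℝ) (h : ∀ γ : q.T, ‖γ.1 x‖ ≤ C * ‖γ‖) :
    ‖x‖ ≤ C := by
  obtain ⟨y, hy, hxy⟩ := q.T_predual
    { toFun := fun γ : q.T => γ.1 x
      map_add' := fun a b => by simp
      map_smul' := fun c a => by simp } C h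
  have hx : x = y := q.eq_of_T fun γ => hxy γ
  rwa [hx]

lemma conv_zero_right (ω : q.T) : q.conv ω 0 = 0 := by
  have h := q.conv_smul_right 0 ω 0
  simpa using h

lemma conv_sum_right {ι : Type*} (ω : q.T) (s : Finset ι) (f : ι → q.T) :
    q.conv ω (∑ i ∈ s, f i) = ∑ i ∈ s, q.conv ω (f i) := by
  classical
  induction s using Finset.induction with
  | empty => simpa using q.conv_zero_right ω
  | insert a s h ih => rw [Finset.sum_insert h, Finset.sum_insert h, q.conv_add_right, ih]

lemma conv_pow (ω : q.T) (k : ℕ) : q.conv ω (q.pow ω k) = q.pow ω (k + 1) := by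
  induction k with
  | zero => rfl
  | succ k ih =>
    show q.conv ω (q.conv (q.pow ω k) ω) = q.conv (q.pow ω (k + 1)) ω
    rw [← q.conv_assoc, ih]

lemma norm_pow_le (ω : q.T) (hω : ‖ω‖ = 1) (k : ℕ) : ‖q.pow ω k‖ ≤ 1 := by
  induction k with
  | zero => exact le_of_eq hω
  | succ k ih =>
    calc ‖q.pow ω (k + 1)‖ ≤ ‖q.pow ω k‖ * ‖ω‖ := q.norm_conv_le _ _
    _ ≤ 1 := by rw [hω, mul_one]; exact ih

lemma smul_sum_apply {ι : Type*} (c : ℂ) (s : Finset ι) (f : ι → q.T) (x : H →L[ℂ] H) :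
    ((c • ∑ i ∈ s, f i : q.T)).1 x = c * ∑ i ∈ s, (f i).1 x := by
  have hsum : ((∑ i ∈ s, f i : q.T) : (H →L[ℂ] H) →L[ℂ] ℂ) = ∑ i ∈ s, ((f i).1) :=
    map_sum q.T.subtype f s
  rw [Submodule.coe_smul, ContinuousLinearMap.smul_apply, hsum,
    ContinuousLinearMap.sum_apply, smul_eq_mul]

lemma cesaro_apply_le (ω : q.T) (hω : ‖ω‖ = 1) (n : ℕ) (z : H →L[ℂ] H) :
    ‖(q.cesaro ω n).1 z‖ ≤ ‖z‖ := by
  unfold QGData.cesaro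
  rw [q.smul_sum_apply, norm_mul]
  rcases Nat.eq_zero_or_pos n with h | h
  · subst h; simp [norm_nonneg]
  · have hn : (0 : ℝ) < (n : ℝ) := by exact_mod_cast h
    have hs : ‖∑ k ∈ Finset.range n, (q.pow ω k).1 z‖ ≤ (n : ℝ) * ‖z‖ := by
      calc ‖∑ k ∈ Finset.range n, (q.pow ω k).1 z‖
          ≤ ∑ k ∈ Finset.range n, ‖(q.pow ω k).1 z‖ := norm_sum_le _ _
        _ ≤ ∑ k ∈ Finset.range n, ‖z‖ := Finset.sum_le_sum fun k _ => by
            calc ‖(q.pow ω k).1 z‖ ≤ ‖q.pow ω k‖ * ‖z‖ := q.apply_le _ _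
              _ ≤ 1 * ‖z‖ := mul_le_mul_of_nonneg_right (q.norm_pow_le ω hω k) (norm_nonneg z)
              _ = ‖z‖ := one_mul _
        _ = (n : ℝ) * ‖z‖ := by rw [Finset.sum_const, Finset.card_range, nsmul_eq_mul]
    have hnorm : ‖((n : ℂ))⁻¹‖ = ((n : ℝ))⁻¹ := by rw [norm_inv]; norm_cast
    rw [hnorm]
    calc ((n : ℝ))⁻¹ * ‖∑ k ∈ Finset.range n, (q.pow ω k).1 z‖
        ≤ ((n : ℝ))⁻¹ * ((n : ℝ) * ‖z‖) := mul_le_mul_of_nonneg_left hs (by positivity)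
      _ = ‖z‖ := by field_simp

end Aux

end QGData

/-- Lemma 2.3. Let `ω ∈ T_▷(𝔾)` with `‖ω‖ = 1` and let `𝒰` be a
free ultrafilter on `ℕ`.  Let `m_𝒰 = w*-lim_𝒰 ω_n` in `B(L²(𝔾))*` (Cesàro sums `ω_n`),
and let `L_{m_𝒰}` be given by `⟨L_{m_𝒰}(x), γ⟩ = ⟨m_𝒰, x ▷ γ⟩`.  Then `L_{m_𝒰}` is a
contractive projection from `B(L²(𝔾))` onto `H̃_{m_𝒰}`, and `H̃_{m_𝒰} = H̃_ω`. -/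
theorem LmU_contractive_projection_onto_harmonics
    {H : Type u} [NormedAddCommGroup H] [InnerProductSpace ℂ H] [CompleteSpace H]
    (q : QGData H)
    (ω : q.T) (hω : ‖ω‖ = 1)
    (𝒰 : Ultrafilter ℕ) (h𝒰 : (𝒰 : Filter ℕ) ≤ Filter.cofinite)
    (m : (H →L[ℂ] H) →L[ℂ] ℂ)
    (hm : ∀ x : H →L[ℂ] H,
      Filter.Tendsto (fun n => (q.cesaro ω n).1 x) (𝒰 : Filter ℕ) (𝓝 (m x)))
    (Lm : (H →L[ℂ] H) → (H →L[ℂ] H))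
    (hLm : ∀ (x : H →L[ℂ] H) (γ : q.T), γ.1 (Lm x) = m (q.actR x γ)) :
    (∀ x : H →L[ℂ] H, ‖Lm x‖ ≤ ‖x‖) ∧
    (∀ x : H →L[ℂ] H, Lm (Lm x) = Lm x) ∧
    Set.range Lm = {x : H →L[ℂ] H | Lm x = x} ∧
    {x : H →L[ℂ] H | Lm x = x} = q.Hsharp ω := by
  have hcof : (𝒰 : Filter ℕ) ≤ Filter.atTop := Nat.cofinite_eq_atTop ▸ h𝒰
  -- `|m z| ≤ ‖z‖`
  have hmnorm : ∀ z : H →L[ℂ] H, ‖m z‖ ≤ ‖z‖ := by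
    intro z
    have h1 : Filter.Tendsto (fun n => ‖(q.cesaro ω n).1 z‖) (𝒰 : Filter ℕ)
        (𝓝 ‖m z‖) := (hm z).norm
    refine le_of_tendsto h1 (Filter.Eventually.of_forall fun n => ?_)
    exact q.cesaro_apply_le ω hω n z
  -- `‖x ▷ γ‖ ≤ ‖γ‖ ‖x‖`
  have hactR : ∀ (x : H →L[ℂ] H) (γ : q.T), ‖q.actR x γ‖ ≤ ‖γ‖ * ‖x‖ := by
    intro x γ
    apply q.norm_le_of_T
    intro τ
    rw [q.actR_spec]
    calc ‖(q.conv γ τ).1 x‖ ≤ ‖q.conv γ τ‖ * ‖x‖ := q.apply_le _ _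
      _ ≤ (‖γ‖ * ‖τ‖) * ‖x‖ :=
          mul_le_mul_of_nonneg_right (q.norm_conv_le γ τ) (norm_nonneg x)
      _ = (‖γ‖ * ‖x‖) * ‖τ‖ := by ring
  -- invariance: `m (y ▷ ω) = m y`
  have key : ∀ y : H →L[ℂ] H, m (q.actR y ω) = m y := by
    intro y
    have h1 : Filter.Tendsto (fun n => (q.cesaro ω n).1 (q.actR y ω)) (𝒰 : Filter ℕ)
        (𝓝 (m (q.actR y ω))) := hm _
    have h2 : ∀ n : ℕ, (q.cesaro ω n).1 (q.actR y ω)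
        = (q.cesaro ω n).1 y + (n : ℂ)⁻¹ * ((q.pow ω n).1 y - (q.pow ω 0).1 y) := by
      intro n
      rw [q.actR_spec]
      unfold QGData.cesaro
      rw [q.conv_smul_right, q.conv_sum_right, q.smul_sum_apply,
        Finset.sum_congr rfl fun k _ => by rw [q.conv_pow ω k], q.smul_sum_apply]
      have ht : ∑ k ∈ Finset.range n, (q.pow ω (k + 1)).1 y
          = ∑ k ∈ Finset.range n, (q.pow ω k).1 y + ((q.pow ω n).1 y - (q.pow ω 0).1 y) := by
        have h := Finset.sum_range_sub (fun k => (q.pow ω k).1 y) n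
        rw [Finset.sum_sub_distrib] at h
        linear_combination h
      rw [ht]
      ring
    have h3 : Filter.Tendsto
        (fun n : ℕ => (n : ℂ)⁻¹ * ((q.pow ω n).1 y - (q.pow ω 0).1 y))
        Filter.atTop (𝓝 0) := by
      have hg : Filter.Tendsto (fun n : ℕ => (n : ℝ)⁻¹ * (2 * ‖y‖)) Filter.atTop (𝓝 0) := by
        have h0 : Filter.Tendsto (fun n : ℕ => (n : ℝ)⁻¹) Filter.atTop (𝓝 0) :=
          tendsto_inv_atTop_nhds_zero_nat
        simpa using h0.mul_const (2 * ‖y‖)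
      refine squeeze_zero_norm ?_ hg
      · intro n
        have hb : ∀ k : ℕ, ‖(q.pow ω k).1 y‖ ≤ ‖y‖ := by
          intro k
          calc ‖(q.pow ω k).1 y‖ ≤ ‖q.pow ω k‖ * ‖y‖ := q.apply_le _ _
            _ ≤ 1 * ‖y‖ := mul_le_mul_of_nonneg_right (q.norm_pow_le ω hω k) (norm_nonneg y)
            _ = ‖y‖ := one_mul _
        have hd : ‖(q.pow ω n).1 y - (q.pow ω 0).1 y‖ ≤ 2 * ‖y‖ := by
          calc ‖(q.pow ω n).1 y - (q.pow ω 0).1 y‖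
              ≤ ‖(q.pow ω n).1 y‖ + ‖(q.pow ω 0).1 y‖ := norm_sub_le _ _
            _ ≤ ‖y‖ + ‖y‖ := add_le_add (hb n) (hb 0)
            _ = 2 * ‖y‖ := by ring
        rw [norm_mul]
        have hnorm : ‖((n : ℂ))⁻¹‖ = ((n : ℝ))⁻¹ := by rw [norm_inv]; norm_cast
        rw [hnorm]
        exact mul_le_mul_of_nonneg_left hd (by positivity)
    have h4 : Filter.Tendsto (fun n : ℕ => (q.cesaro ω n).1 y
        + (n : ℂ)⁻¹ * ((q.pow ω n).1 y - (q.pow ω 0).1 y)) (𝒰 : Filter ℕ)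
        (𝓝 (m y + 0)) := (hm y).add (h3.mono_left hcof)
    rw [add_zero] at h4
    exact tendsto_nhds_unique (h1.congr h2) h4
  -- harmonic elements are fixed
  have hfix : ∀ x : H →L[ℂ] H, q.actL ω x = x → Lm x = x := by
    intro x hx
    apply q.eq_of_T
    intro γ
    rw [hLm]
    have hp : ∀ (k : ℕ) (τ : q.T), (q.conv τ (q.pow ω k)).1 x = τ.1 x := by
      intro k
      induction k with
      | zero =>
        intro τ
        have h := q.actL_spec ω τ x
        rw [hx] at h
        exact h.symm
      | succ k ih =>
        intro τ
        show (q.conv τ (q.conv (q.pow ω k) ω)).1 x = τ.1 x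
        rw [← q.conv_assoc]
        have h := q.actL_spec ω (q.conv τ (q.pow ω k)) x
        rw [hx] at h
        rw [← h]
        exact ih τ
    have hev : ∀ᶠ n in (𝒰 : Filter ℕ), (q.cesaro ω n).1 (q.actR x γ) = γ.1 x := by
      have h1 : {n : ℕ | 1 ≤ n} ∈ (𝒰 : Filter ℕ) := hcof (Filter.mem_atTop 1)
      filter_upwards [h1] with n hn
      rw [q.actR_spec]
      unfold QGData.cesaro
      rw [q.conv_smul_right, q.conv_sum_right, q.smul_sum_apply]
      rw [Finset.sum_congr rfl fun k _ => hp k γ]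
      rw [Finset.sum_const, Finset.card_range, nsmul_eq_mul, ← mul_assoc,
        inv_mul_cancel₀ (Nat.cast_ne_zero.mpr (by omega) : ((n : ℂ)) ≠ 0), one_mul]
    have h2 : Filter.Tendsto (fun n => (q.cesaro ω n).1 (q.actR x γ)) (𝒰 : Filter ℕ)
        (𝓝 (γ.1 x)) :=
      Filter.Tendsto.congr' (hev.mono fun n h => h.symm) tendsto_const_nhds
    exact tendsto_nhds_unique (hm (q.actR x γ)) h2
  -- `Lm x` is harmonic
  have hproj : ∀ x : H →L[ℂ] H, q.actL ω (Lm x) = Lm x := by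
    intro x
    apply q.eq_of_T
    intro γ
    rw [q.actL_spec, hLm, hLm]
    have hAR : q.actR x (q.conv γ ω) = q.actR (q.actR x γ) ω := by
      apply q.eq_of_T
      intro τ
      calc τ.1 (q.actR x (q.conv γ ω)) = (q.conv (q.conv γ ω) τ).1 x := q.actR_spec _ _ _
        _ = (q.conv γ (q.conv ω τ)).1 x := by rw [q.conv_assoc]
        _ = (q.conv ω τ).1 (q.actR x γ) := (q.actR_spec _ _ _).symm
        _ = τ.1 (q.actR (q.actR x γ) ω) := (q.actR_spec _ _ _).symm
    rw [hAR]
    exact key (q.actR x γ)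
  have hcontr : ∀ x : H →L[ℂ] H, ‖Lm x‖ ≤ ‖x‖ := by
    intro x
    apply q.norm_le_of_T
    intro γ
    rw [hLm]
    calc ‖m (q.actR x γ)‖ ≤ ‖q.actR x γ‖ := hmnorm _
      _ ≤ ‖γ‖ * ‖x‖ := hactR x γ
      _ = ‖x‖ * ‖γ‖ := mul_comm _ _
  have hHs : {x : H →L[ℂ] H | Lm x = x} = q.Hsharp ω := by
    ext x
    constructor
    · intro h
      show q.actL ω x = x
      conv_lhs => rw [← h]
      rw [hproj x, h]
    · intro h
      exact hfix x h
  refine ⟨hcontr, fun x => hfix _ (hproj x), ?_, hHs⟩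
  ext x
  simp only [Set.mem_range, Set.mem_setOf_eq]
  exact ⟨fun ⟨y, hy⟩ => hy ▸ hfix _ (hproj y), fun h => ⟨x, h⟩⟩

end QGPaper
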